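/- Let (X, ‖·‖) be a Banach space and let T : X → X be a (k, a)-enriched Kannan mapping with k ∈ [0, ∞) and a ∈ [0, 1/2). Set λ = 1/(k+1) ∈ (0, 1]. Then for every x₀ ∈ X, the Krasnoselskij iteration defined by xₙ₊₁ = (1−λ)xₙ + λT xₙ converges (strongly) to the unique fixed point p of T. -/

import Mathlib

open Filter

/-- Every Picard sequence of a Kannan mapping on a Banach space converges
to a fixed point of the mapping. -/
lemma kannan_picard_tendsto
    {X : Type*} [NormedAddCommGroup X] [NormedSpace ℝ X] [CompleteSpace X]
    (S : X → X) (a : ℝ) (ha0 : 0 ≤ a) (ha : a < 1 / 2)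
    (hS : ∀ x y : X, ‖S x - S y‖ ≤ a * (‖x - S x‖ + ‖y - S y‖))
    (x : ℕ → X) (hx : ∀ n, x (n + 1) = S (x n)) :
    ∃ p : X, Filter.Tendsto x Filter.atTop (nhds p) ∧ S p = p := by
  have h1a : 0 < 1 - a := by linarith
  set r : ℝ := a / (1 - a) with hr_def
  have hr0 : 0 ≤ r := div_nonneg ha0 h1a.le
  have hr1 : r < 1 := by rw [hr_def, div_lt_one h1a]; linarith
  set d : ℕ → ℝ := fun n => ‖x n - x (n + 1)‖ with hd_def
  have hd0 : ∀ n, 0 ≤ d n := fun n => norm_nonneg _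
  have hstep : ∀ n, d (n + 1) ≤ r * d n := by
    intro n
    have h := hS (x n) (x (n + 1))
    rw [← hx n, ← hx (n + 1)] at h
    have hdn : d (n + 1) ≤ a * (d n + d (n + 1)) := h
    rw [hr_def, div_mul_eq_mul_div, le_div_iff₀ h1a]
    nlinarith [hd0 n, hd0 (n + 1)]
  have hgeo : ∀ n, d n ≤ d 0 * r ^ n := by
    intro n
    induction n with
    | zero => simp
    | succ m ih =>
      calc d (m + 1) ≤ r * d m := hstep m
        _ ≤ r * (d 0 * r ^ m) := by nlinarith
        _ = d 0 * r ^ (m + 1) := by ring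
  have hcauchy : CauchySeq x := by
    apply cauchySeq_of_le_geometric r (d 0) hr1
    intro n
    rw [dist_eq_norm]
    exact hgeo n
  obtain ⟨p, hp⟩ := cauchySeq_tendsto_of_complete hcauchy
  refine ⟨p, hp, ?_⟩
  have hdlim : Tendsto d atTop (nhds 0) := by
    apply squeeze_zero hd0 hgeo
    have := (tendsto_pow_atTop_nhds_zero_of_lt_one hr0 hr1).const_mul (d 0)
    simpa using this
  have hL : Tendsto (fun n => ‖x (n + 1) - S p‖) atTop (nhds ‖p - S p‖) :=
    ((hp.comp (tendsto_add_atTop_nat 1)).sub tendsto_const_nhds).norm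
  have hR : Tendsto (fun n => a * (d n + ‖p - S p‖)) atTop
      (nhds (a * (0 + ‖p - S p‖))) :=
    ((hdlim.add tendsto_const_nhds).const_mul a)
  have hle : ‖p - S p‖ ≤ a * (0 + ‖p - S p‖) := by
    refine le_of_tendsto_of_tendsto' hL hR ?_
    intro n
    have h := hS (x n) p
    rw [← hx n] at h
    exact h
  have hz : ‖p - S p‖ = 0 := by nlinarith [norm_nonneg (p - S p)]
  have h0 : p - S p = 0 := norm_eq_zero.mp hz
  exact (sub_eq_zero.mp h0).symm

/-- For a `(k, a)`-enriched Kannan mapping `T` on a Banach space, with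
`λ = 1/(k+1)`, the Krasnoselskij iteration `xₙ₊₁ = (1−λ)xₙ + λ T xₙ` converges
strongly to the unique fixed point of `T`, for every starting point `x₀`. -/
theorem enrichedKannan_krasnoselskij_tendsto
    {X : Type*} [NormedAddCommGroup X] [NormedSpace ℝ X] [CompleteSpace X]
    (T : X → X) (k a : ℝ) (hk : 0 ≤ k) (ha0 : 0 ≤ a) (ha : a < 1 / 2)
    (hT : ∀ x y : X, ‖k • (x - y) + (T x - T y)‖ ≤ a * (‖x - T x‖ + ‖y - T y‖)) :
    ∃ p : X, T p = p ∧ (∀ q : X, T q = q → q = p) ∧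
      ∀ x : ℕ → X,
        (∀ n : ℕ, x (n + 1) = (1 - 1 / (k + 1)) • x n + (1 / (k + 1)) • T (x n)) →
        Filter.Tendsto x Filter.atTop (nhds p) := by
  have hk1 : (0:ℝ) < k + 1 := by linarith
  set l : ℝ := 1 / (k + 1) with hl_def
  have hl0 : 0 < l := by positivity
  set S : X → X := fun z => (1 - l) • z + l • T z with hS_def
  have hsub : ∀ z : X, z - S z = l • (z - T z) := by
    intro z
    simp only [hS_def]
    module
  have hlk : 1 - l = l * k := by
    rw [hl_def]; field_simp; ring
  have hdiff : ∀ x y : X, S x - S y = l • (k • (x - y) + (T x - T y)) := by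
    intro x y
    simp only [hS_def, hlk]
    module
  have hSa : ∀ x y : X, ‖S x - S y‖ ≤ a * (‖x - S x‖ + ‖y - S y‖) := by
    intro x y
    rw [hdiff, hsub, hsub, norm_smul, norm_smul, norm_smul,
      Real.norm_eq_abs, abs_of_pos hl0]
    calc l * ‖k • (x - y) + (T x - T y)‖
        ≤ l * (a * (‖x - T x‖ + ‖y - T y‖)) := by
          exact mul_le_mul_of_nonneg_left (hT x y) hl0.le
      _ = a * (l * ‖x - T x‖ + l * ‖y - T y‖) := by ring
  -- existence of a fixed point via the Picard iteration from 0
  obtain ⟨p, hptend, hpfix⟩ := kannan_picard_tendsto S a ha0 ha hSa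
    (fun n => S^[n] 0) (fun n => by simp [Function.iterate_succ_apply'])
  -- fixed points of S are fixed points of T
  have hfixTS : ∀ z : X, S z = z ↔ T z = z := by
    intro z
    constructor
    · intro h
      have h2 : z - S z = 0 := by rw [h, sub_self]
      rw [hsub] at h2
      have := smul_eq_zero.mp h2
      rcases this with h3 | h3
      · exact absurd h3 (ne_of_gt hl0)
      · have := sub_eq_zero.mp h3
        exact this.symm
    · intro h
      simp only [hS_def, h]
      module
  have hTp : T p = p := (hfixTS p).mp hpfix
  have huniq : ∀ q : X, T q = q → q = p := by
    intro q hq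
    have hSq : S q = q := (hfixTS q).mpr hq
    have h := hSa q p
    rw [hSq, hpfix, sub_self, sub_self] at h
    simp only [norm_zero] at h
    have : ‖q - p‖ ≤ 0 := by simpa using h
    have : q - p = 0 := norm_eq_zero.mp (le_antisymm this (norm_nonneg _))
    exact sub_eq_zero.mp this
  refine ⟨p, hTp, huniq, ?_⟩
  intro x hx
  have hx' : ∀ n, x (n + 1) = S (x n) := fun n => hx n
  obtain ⟨q, hqtend, hqfix⟩ := kannan_picard_tendsto S a ha0 ha hSa x hx'
  have : q = p := huniq q ((hfixTS q).mp hqfix)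
  rwa [this] at hqtend
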